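/- arXiv:1304.6301 — 2 statements merged into one kernel-verified Lean document; each statement's English description precedes it below -/
import Mathlib

section
/- Let Σ be a finite alphabet, N ≥ 1 a natural number, w1 ∈ Σ* a finite word, s ∈ Σ^+ a nonempty finite word, w2 an ω-word over Σ, and M a natural number with M > 2^{N+1}. Then w1·s^M·w2 ≡_N w1·s^{M+1}·w2, i.e., the two ω-words satisfy exactly the same FO_Σ sentences of quantifier height at most N. -/
namespace Stmt0

variable {Γ : Type*}

/-- `m`-fold concatenation of a finite word. -/
def lpow (u : List Γ) : ℕ → List Γ
  | 0 => []
  | m + 1 => u ++ lpow u m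

/-- Concatenation of a finite word with an ω-word. -/
def wcat (u : List Γ) (w : ℕ → Γ) : ℕ → Γ := fun n =>
  if h : n < u.length then u.get ⟨n, h⟩ else w (n - u.length)

/-- Syntax of first-order logic `FO_Γ` over ω-words over `Γ`:
variables are natural numbers (interpreted as positions), atomic formulas are
`a(z)` for each letter `a`, `S(z,z')`, `z < z'` and `z = z'`,
closed under `¬`, `∧` and `∃`. -/
inductive FO (Γ : Type*) : Type _
  | letter : Γ → ℕ → FO Γ
  | succ : ℕ → ℕ → FO Γ
  | lt : ℕ → ℕ → FO Γ
  | eq : ℕ → ℕ → FO Γ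
  | not : FO Γ → FO Γ
  | and : FO Γ → FO Γ → FO Γ
  | ex : ℕ → FO Γ → FO Γ

/-- Satisfaction of an FO formula on an ω-word under an assignment of variables
to positions. -/
def FO.Sat (w : ℕ → Γ) : FO Γ → (ℕ → ℕ) → Prop
  | .letter a z, f => w (f z) = a
  | .succ z z', f => f z' = f z + 1
  | .lt z z', f => f z < f z'
  | .eq z z', f => f z = f z'
  | .not φ, f => ¬ FO.Sat w φ f
  | .and φ ψ, f => FO.Sat w φ f ∧ FO.Sat w ψ f
  | .ex z φ, f => ∃ pos : ℕ, FO.Sat w φ (Function.update f z pos)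

/-- Quantifier height: maximal nesting depth of `∃`. -/
def FO.qh : FO Γ → ℕ
  | .letter _ _ => 0
  | .succ _ _ => 0
  | .lt _ _ => 0
  | .eq _ _ => 0
  | .not φ => FO.qh φ
  | .and φ ψ => max (FO.qh φ) (FO.qh ψ)
  | .ex _ φ => FO.qh φ + 1

/-- Free variables of an FO formula. -/
def FO.free : FO Γ → Finset ℕ
  | .letter _ z => {z}
  | .succ z z' => {z, z'}
  | .lt z z' => {z, z'}
  | .eq z z' => {z, z'}
  | .not φ => FO.free φ
  | .and φ ψ => FO.free φ ∪ FO.free ψ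
  | .ex z φ => (FO.free φ).erase z

/-- Satisfaction of a sentence (the assignment is irrelevant, so we fix one). -/
def FO.SatS (w : ℕ → Γ) (φ : FO Γ) : Prop := FO.Sat w φ fun _ => 0

/-- `w ≡_n w'`: the two ω-words satisfy exactly the same FO sentences
of quantifier height at most `n`. -/
def FOEquiv (n : ℕ) (w w' : ℕ → Γ) : Prop :=
  ∀ φ : FO Γ, FO.free φ = ∅ → FO.qh φ ≤ n → (FO.SatS w φ ↔ FO.SatS w' φ)

/-! ### Auxiliary development for the stuttering theorem -/

/-- Distance thresholds for the Ehrenfeucht–Fraïssé argument. -/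
def DD (p : ℕ) : ℕ → ℕ
  | 0 => 2
  | k + 1 => 2 * DD p k + (p - 1)

lemma DD_succ (p k : ℕ) : DD p (k + 1) = 2 * DD p k + (p - 1) := rfl

lemma DD_two (p : ℕ) : ∀ k, 2 ≤ DD p k := by
  intro k
  induction k with
  | zero => simp [DD]
  | succ k ih => rw [DD_succ]; omega

lemma DD_mono (p k : ℕ) : DD p k ≤ DD p (k + 1) := by
  have := DD_two p k; rw [DD_succ]; omega

lemma DD_add (p : ℕ) (hp : 1 ≤ p) : ∀ k, DD p k + p = (p + 1) * 2 ^ k + 1 := by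
  intro k
  induction k with
  | zero => simp [DD]; omega
  | succ k ih =>
    have h2 : (p + 1) * 2 ^ (k + 1) = 2 * ((p + 1) * 2 ^ k) := by ring
    rw [DD_succ, h2]; omega

/-- The invariant maintained by Duplicator: every pinned position is matched
either identically (type `false`, deep inside the common prefix region) or with
shift `p` (type `true`, far to the right of the prefix `w1`); cross-type pairs
keep a large gap. -/
def Ok (L p M k : ℕ) (f g : ℕ → ℕ) : Prop :=
  ∃ t : ℕ → Bool,
    (∀ z, g z = f z + (if t z then p else 0)) ∧
    (∀ z, t z = false → f z + DD p k ≤ L + p * M) ∧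
    (∀ z, t z = true → L + DD p k ≤ f z) ∧
    (∀ z z', t z = false → t z' = true →
      f z + DD p k ≤ f z' ∨ g z' + DD p k ≤ g z)

lemma Ok.update {L p M k : ℕ} {f g : ℕ → ℕ} {t : ℕ → Bool}
    (hg : ∀ z, g z = f z + (if t z then p else 0))
    (h0 : ∀ z, t z = false → f z + DD p (k + 1) ≤ L + p * M)
    (h1 : ∀ z, t z = true → L + DD p (k + 1) ≤ f z)
    (h01 : ∀ z z', t z = false → t z' = true →
      f z + DD p (k + 1) ≤ f z' ∨ g z' + DD p (k + 1) ≤ g z)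
    (z0 x : ℕ) (t0 : Bool)
    (c0 : t0 = false → x + DD p k ≤ L + p * M)
    (c1 : t0 = true → L + DD p k ≤ x)
    (c2 : t0 = true → ∀ z, t z = false → f z + DD p k ≤ x ∨ (x + p) + DD p k ≤ f z)
    (c3 : t0 = false → ∀ z, t z = true → x + DD p k ≤ f z ∨ g z + DD p k ≤ x) :
    Ok L p M k (Function.update f z0 x)
      (Function.update g z0 (x + if t0 then p else 0)) := by
  have hDm := DD_mono p k
  refine ⟨Function.update t z0 t0, ?_, ?_, ?_, ?_⟩
  · intro z
    rcases eq_or_ne z z0 with rfl | hz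
    · simp
    · simp only [Function.update_of_ne hz]; exact hg z
  · intro z hz
    rcases eq_or_ne z z0 with rfl | hne
    · simp only [Function.update_self] at hz ⊢; exact c0 hz
    · simp only [Function.update_of_ne hne] at hz ⊢
      have := h0 z hz; omega
  · intro z hz
    rcases eq_or_ne z z0 with rfl | hne
    · simp only [Function.update_self] at hz ⊢; exact c1 hz
    · simp only [Function.update_of_ne hne] at hz ⊢
      have := h1 z hz; omega
  · intro z z' hz hz'
    by_cases heq : z = z0
    · by_cases heq' : z' = z0
      · rw [heq, Function.update_self] at hz
        rw [heq', Function.update_self] at hz'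
        rw [hz] at hz'; simp at hz'
      · rw [heq, Function.update_self] at hz
        rw [Function.update_of_ne heq'] at hz'
        have h := c3 hz z' hz'
        rw [heq]
        simp only [Function.update_self, Function.update_of_ne heq', hz]
        simp only [Bool.false_eq_true, if_false]
        omega
    · by_cases heq' : z' = z0
      · rw [heq', Function.update_self] at hz'
        rw [Function.update_of_ne heq] at hz
        have h := c2 hz' z hz
        have hgz : g z = f z := by rw [hg z, hz]; simp
        rw [heq']
        simp only [Function.update_self, Function.update_of_ne heq, hz']
        simp only [if_true]
        omega
      · rw [Function.update_of_ne heq] at hz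
        rw [Function.update_of_ne heq'] at hz'
        simp only [Function.update_of_ne heq, Function.update_of_ne heq']
        have := h01 z z' hz hz'; omega

lemma stepA {L p M k : ℕ} (hp : 1 ≤ p) (hMk : 2 * DD p k + p ≤ p * M)
    {f g : ℕ → ℕ} (h : Ok L p M (k + 1) f g) (z0 x : ℕ) :
    ∃ y, Ok L p M k (Function.update f z0 x) (Function.update g z0 y) := by
  obtain ⟨t, hg, h0, h1, h01⟩ := h
  have hDs := DD_succ p k
  have hD2 := DD_two p k
  have hgt : ∀ z, t z = true → g z = f z + p := fun z hz => by rw [hg z, hz]; simp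
  have hgf : ∀ z, t z = false → g z = f z := fun z hz => by rw [hg z, hz]; simp
  by_cases hMT : ∃ a, t a = true ∧ f a < x + DD p k ∧ x < f a + DD p k + p
  · obtain ⟨a, ha, ha1, ha2⟩ := hMT
    refine ⟨x + p, ?_⟩
    have R := Ok.update hg h0 h1 h01 z0 x true
      (fun h => by simp at h)
      (fun _ => by have := h1 a ha; omega)
      (fun _ z hz => by
        have hq := h01 z a hz ha
        have h1' := hgt a ha; have h2' := hgf z hz
        omega)
      (fun h => by simp at h)
    simpa using R
  · by_cases hMF : ∃ b, t b = false ∧ f b < x + DD p k + p ∧ x < f b + DD p k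
    · obtain ⟨b, hb, hb1, hb2⟩ := hMF
      refine ⟨x, ?_⟩
      have R := Ok.update hg h0 h1 h01 z0 x false
        (fun _ => by have := h0 b hb; omega)
        (fun h => by simp at h)
        (fun h => by simp at h)
        (fun _ z hz => by
          have hq := h01 b z hb hz
          have h1' := hgt z hz; have h2' := hgf b hb
          omega)
      simpa using R
    · push_neg at hMT hMF
      by_cases hx : L + DD p k ≤ x
      · refine ⟨x + p, ?_⟩
        have R := Ok.update hg h0 h1 h01 z0 x true
          (fun h => by simp at h)
          (fun _ => hx)
          (fun _ z hz => by
            have hq := hMF z hz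
            have h1' := hgf z hz
            omega)
          (fun h => by simp at h)
        simpa using R
      · refine ⟨x, ?_⟩
        have R := Ok.update hg h0 h1 h01 z0 x false
          (fun _ => by omega)
          (fun h => by simp at h)
          (fun h => by simp at h)
          (fun _ z hz => by
            have hq := hMT z hz
            have h1' := hgt z hz
            omega)
        simpa using R

lemma stepB {L p M k : ℕ} (hp : 1 ≤ p) (hMk : 2 * DD p k + p ≤ p * M)
    {f g : ℕ → ℕ} (h : Ok L p M (k + 1) f g) (z0 y : ℕ) :
    ∃ x, Ok L p M k (Function.update f z0 x) (Function.update g z0 y) := by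
  obtain ⟨t, hg, h0, h1, h01⟩ := h
  have hDs := DD_succ p k
  have hD2 := DD_two p k
  have hgt : ∀ z, t z = true → g z = f z + p := fun z hz => by rw [hg z, hz]; simp
  have hgf : ∀ z, t z = false → g z = f z := fun z hz => by rw [hg z, hz]; simp
  by_cases hMT : ∃ a, t a = true ∧ g a < y + DD p k + p ∧ y < g a + DD p k
  · obtain ⟨a, ha, ha1, ha2⟩ := hMT
    have hga := hgt a ha
    have hfa := h1 a ha
    have hyp : L + DD p k + p ≤ y := by omega
    refine ⟨y - p, ?_⟩
    have R := Ok.update hg h0 h1 h01 z0 (y - p) true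
      (fun h => by simp at h)
      (fun _ => by omega)
      (fun _ z hz => by
        have hq := h01 z a hz ha
        have h1' := hgf z hz
        omega)
      (fun h => by simp at h)
    have he : (y - p) + (if (true : Bool) then p else 0) = y := by simp; omega
    rwa [he] at R
  · by_cases hMF : ∃ b, t b = false ∧ g b < y + DD p k ∧ y < g b + DD p k + p
    · obtain ⟨b, hb, hb1, hb2⟩ := hMF
      have hgb := hgf b hb
      refine ⟨y, ?_⟩
      have R := Ok.update hg h0 h1 h01 z0 y false
        (fun _ => by have := h0 b hb; omega)
        (fun h => by simp at h)
        (fun h => by simp at h)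
        (fun _ z hz => by
          have hq := h01 b z hb hz
          have h1' := hgt z hz
          omega)
      simpa using R
    · push_neg at hMT hMF
      by_cases hy : L + DD p k + p ≤ y
      · refine ⟨y - p, ?_⟩
        have R := Ok.update hg h0 h1 h01 z0 (y - p) true
          (fun h => by simp at h)
          (fun _ => by omega)
          (fun _ z hz => by
            have hq := hMF z hz
            have h1' := hgf z hz
            omega)
          (fun h => by simp at h)
        have he : (y - p) + (if (true : Bool) then p else 0) = y := by simp; omega
        rwa [he] at R
      · refine ⟨y, ?_⟩
        have R := Ok.update hg h0 h1 h01 z0 y false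
          (fun _ => by omega)
          (fun h => by simp at h)
          (fun h => by simp at h)
          (fun _ z hz => by
            have hq := hMT z hz
            have h1' := hgt z hz
            omega)
        simpa using R

theorem main_equiv {L p M N : ℕ} {A B : ℕ → Γ} (hp : 1 ≤ p)
    (hMk : ∀ k, k + 1 ≤ N → 2 * DD p k + p ≤ p * M)
    (hF1 : ∀ n, n < L + p * M → A n = B n)
    (hF2 : ∀ n, L ≤ n → A n = B (n + p)) :
    ∀ φ : FO Γ, ∀ k, k ≤ N → FO.qh φ ≤ k → ∀ f g, Ok L p M k f g →
      (FO.Sat A φ f ↔ FO.Sat B φ g) := by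
  intro φ
  induction φ with
  | letter a z =>
    intro k hk hq f g hOk
    obtain ⟨t, hg, h0, h1, h01⟩ := hOk
    have hD2 := DD_two p k
    simp only [FO.Sat]
    cases ht : t z with
    | false =>
      have := h0 z ht
      have hgz : g z = f z := by rw [hg z, ht]; simp
      rw [hgz, hF1 (f z) (by omega)]
    | true =>
      have := h1 z ht
      have hgz : g z = f z + p := by rw [hg z, ht]; simp
      rw [hgz, ← hF2 (f z) (by omega)]
  | succ z z' =>
    intro k hk hq f g hOk
    obtain ⟨t, hg, h0, h1, h01⟩ := hOk
    have hD2 := DD_two p k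
    have hgz := hg z; have hgz' := hg z'
    simp only [FO.Sat]
    cases ht : t z <;> cases ht' : t z' <;>
      simp [ht, ht'] at hgz hgz'
    · omega
    · have := h01 z z' ht ht'; omega
    · have := h01 z' z ht' ht; omega
    · omega
  | lt z z' =>
    intro k hk hq f g hOk
    obtain ⟨t, hg, h0, h1, h01⟩ := hOk
    have hD2 := DD_two p k
    have hgz := hg z; have hgz' := hg z'
    simp only [FO.Sat]
    cases ht : t z <;> cases ht' : t z' <;>
      simp [ht, ht'] at hgz hgz'
    · omega
    · have := h01 z z' ht ht'; omega
    · have := h01 z' z ht' ht; omega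
    · omega
  | eq z z' =>
    intro k hk hq f g hOk
    obtain ⟨t, hg, h0, h1, h01⟩ := hOk
    have hD2 := DD_two p k
    have hgz := hg z; have hgz' := hg z'
    simp only [FO.Sat]
    cases ht : t z <;> cases ht' : t z' <;>
      simp [ht, ht'] at hgz hgz'
    · omega
    · have := h01 z z' ht ht'; omega
    · have := h01 z' z ht' ht; omega
    · omega
  | not φ ih =>
    intro k hk hq f g hOk
    simp only [FO.qh] at hq
    simp only [FO.Sat]
    exact not_congr (ih k hk hq f g hOk)
  | and φ ψ ih1 ih2 =>
    intro k hk hq f g hOk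
    simp only [FO.qh, max_le_iff] at hq
    simp only [FO.Sat]
    exact and_congr (ih1 k hk hq.1 f g hOk) (ih2 k hk hq.2 f g hOk)
  | ex z φ ih =>
    intro k hk hq f g hOk
    simp only [FO.qh] at hq
    obtain ⟨k', rfl⟩ : ∃ k', k = k' + 1 := ⟨k - 1, by omega⟩
    simp only [FO.Sat]
    constructor
    · rintro ⟨x, hx⟩
      obtain ⟨y, hOk'⟩ := stepA hp (hMk k' hk) hOk z x
      exact ⟨y, (ih k' (by omega) (by omega) _ _ hOk').mp hx⟩
    · rintro ⟨y, hy⟩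
      obtain ⟨x, hOk'⟩ := stepB hp (hMk k' hk) hOk z y
      exact ⟨x, (ih k' (by omega) (by omega) _ _ hOk').mpr hy⟩

/-! ### Facts about `wcat` and `lpow` -/

lemma wcat_lt {u : List Γ} {w : ℕ → Γ} {n : ℕ} (h : n < u.length) :
    wcat u w n = u.get ⟨n, h⟩ := by
  simp [wcat, h]

lemma wcat_ge {u : List Γ} {w : ℕ → Γ} {n : ℕ} (h : u.length ≤ n) :
    wcat u w n = w (n - u.length) := by
  have : ¬ n < u.length := by omega
  simp [wcat, this]

lemma wcat_append (u v : List Γ) (w : ℕ → Γ) :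
    wcat (u ++ v) w = wcat u (wcat v w) := by
  funext n
  by_cases h1 : n < u.length
  · rw [wcat_lt (u := u ++ v) (by simp; omega), wcat_lt h1]
    simp only [List.get_eq_getElem]
    exact List.getElem_append_left h1
  · push_neg at h1
    by_cases h2 : n < u.length + v.length
    · rw [wcat_lt (u := u ++ v) (by simp; omega), wcat_ge h1,
        wcat_lt (u := v) (by omega)]
      simp only [List.get_eq_getElem]
      exact List.getElem_append_right h1
    · push_neg at h2
      rw [wcat_ge (by simp; omega), wcat_ge h1, wcat_ge (by omega)]
      simp [Nat.sub_sub]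

lemma lpow_length (s : List Γ) : ∀ m, (lpow s m).length = m * s.length := by
  intro m
  induction m with
  | zero => simp [lpow]
  | succ m ih => simp [lpow, ih, Nat.succ_mul]; omega

lemma lpow_comm (s : List Γ) : ∀ m, lpow s (m + 1) = lpow s m ++ s := by
  intro m
  induction m with
  | zero => simp [lpow]
  | succ m ih =>
    show s ++ lpow s (m + 1) = (s ++ lpow s m) ++ s
    rw [ih, List.append_assoc]

lemma lpow_prefix (s : List Γ) (m j : ℕ) (h : j < (lpow s m).length) :
    (lpow s (m + 1))[j]'(by rw [lpow_comm]; simp [List.length_append]; omega) = (lpow s m)[j] := by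
  exact (List.getElem_of_eq (lpow_comm s m) _).trans (List.getElem_append_left h)

lemma lpow_shift (s : List Γ) (M j : ℕ) (hM : 1 ≤ M) (hj : s.length ≤ j)
    (hj2 : j < (lpow s M).length) :
    (lpow s M)[j] = (lpow s M)[j - s.length]'(by omega) := by
  obtain ⟨M', rfl⟩ : ∃ M', M = M' + 1 := ⟨M - 1, by omega⟩
  have hlen : (lpow s (M' + 1)).length = s.length + (lpow s M').length := by
    show (s ++ lpow s M').length = _
    simp
  have hjl : j - s.length < (lpow s M').length := by omega
  have h1 : (lpow s (M' + 1))[j]'hj2 = (lpow s M')[j - s.length]'hjl := by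
    exact (List.getElem_of_eq (rfl : lpow s (M' + 1) = s ++ lpow s M') _).trans
      (List.getElem_append_right hj)
  exact h1.trans (lpow_prefix s M' (j - s.length) hjl).symm

lemma lpow_head (s : List Γ) (M j : ℕ) (hM : 1 ≤ M) (hj : j < s.length) :
    (lpow s M)[j]'(by rw [lpow_length]; have := Nat.mul_le_mul_right s.length hM; omega) =
      s[j] := by
  obtain ⟨M', rfl⟩ : ∃ M', M = M' + 1 := ⟨M - 1, by omega⟩
  exact (List.getElem_of_eq (rfl : lpow s (M' + 1) = s ++ lpow s M') _).trans
    (List.getElem_append_left hj)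

/-- Stuttering theorem for FO: if `M > 2^(N+1)` then
`w1 · s^M · w2 ≡_N w1 · s^(M+1) · w2`. -/
theorem stuttering_fo {Γ : Type*} [Fintype Γ] (N : ℕ) (hN : 1 ≤ N)
    (w1 s : List Γ) (hs : s ≠ []) (w2 : ℕ → Γ) (M : ℕ) (hM : 2 ^ (N + 1) < M) :
    FOEquiv N (wcat (w1 ++ lpow s M) w2) (wcat (w1 ++ lpow s (M + 1)) w2) := by
  have hp : 1 ≤ s.length := List.length_pos_iff.mpr hs
  set L := w1.length with hL
  set p := s.length with hpdef
  set IA := wcat (lpow s M) w2 with hIA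
  have hA : wcat (w1 ++ lpow s M) w2 = wcat w1 IA := wcat_append w1 (lpow s M) w2
  have hBsplit : w1 ++ lpow s (M + 1) = (w1 ++ s) ++ lpow s M := by
    show w1 ++ (s ++ lpow s M) = _
    rw [List.append_assoc]
  have hB : wcat (w1 ++ lpow s (M + 1)) w2 = wcat w1 (wcat s IA) := by
    rw [hBsplit, wcat_append, wcat_append]
  have hM1 : 1 ≤ M := by have := Nat.one_le_two_pow (n := N + 1); omega
  have hlenM : (lpow s M).length = M * p := lpow_length s M
  have hcomm : M * p = p * M := Nat.mul_comm M p
  -- the two letter-comparison facts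
  have hF1 : ∀ n, n < L + p * M →
      wcat (w1 ++ lpow s M) w2 n = wcat (w1 ++ lpow s (M + 1)) w2 n := by
    intro n hn
    rw [hA, hB]
    by_cases h1 : n < L
    · rw [wcat_lt (u := w1) (w := IA) h1, wcat_lt (u := w1) (w := wcat s IA) h1]
    · push_neg at h1
      rw [wcat_ge (u := w1) (w := IA) h1, wcat_ge (u := w1) (w := wcat s IA) h1]
      set m := n - L with hm
      have hmlt : m < M * p := by omega
      rw [hIA, wcat_lt (u := lpow s M) (w := w2) (by rw [hlenM]; omega)]
      by_cases h2 : m < p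
      · rw [wcat_lt (u := s) (w := IA) h2]
        simp only [List.get_eq_getElem]
        exact lpow_head s M m hM1 h2
      · push_neg at h2
        rw [wcat_ge (u := s) (w := IA) h2, hIA,
          wcat_lt (u := lpow s M) (w := w2) (by rw [hlenM]; omega)]
        simp only [List.get_eq_getElem]
        exact lpow_shift s M m hM1 h2 (by rw [hlenM]; omega)
  have hF2 : ∀ n, L ≤ n →
      wcat (w1 ++ lpow s M) w2 n = wcat (w1 ++ lpow s (M + 1)) w2 (n + p) := by
    intro n hn
    rw [hA, hB]
    rw [wcat_ge (u := w1) (w := IA) hn, wcat_ge (u := w1) (w := wcat s IA) (by omega)]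
    have h1 : n + p - L = (n - L) + p := by omega
    rw [h1, wcat_ge (u := s) (w := IA) (by omega)]
    congr 1
    omega
  -- the numeric bound
  have hMk : ∀ k, k + 1 ≤ N → 2 * DD p k + p ≤ p * M := by
    intro k hk
    have hX := DD_add p hp k
    have hXX : (p + 1) * 2 ^ (k + 1) = 2 * ((p + 1) * 2 ^ k) := by ring
    have e1 : (p + 1) * 2 ^ (k + 1) ≤ p * 2 ^ (N + 1) := by
      calc (p + 1) * 2 ^ (k + 1) ≤ (2 * p) * 2 ^ (k + 1) :=
            Nat.mul_le_mul_right _ (by omega)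
        _ ≤ (2 * p) * 2 ^ N := Nat.mul_le_mul_left _ (Nat.pow_le_pow_right (by omega) hk)
        _ = p * 2 ^ (N + 1) := by ring
    have e2 : p * (2 ^ (N + 1) + 1) ≤ p * M := Nat.mul_le_mul_left p (by omega)
    have e3 : p * (2 ^ (N + 1) + 1) = p * 2 ^ (N + 1) + p := by ring
    omega
  -- the initial configuration
  have hOk : Ok L p M N (fun _ => 0) (fun _ => 0) := by
    refine ⟨fun _ => false, by simp, ?_, by simp, by simp⟩
    intro z _
    obtain ⟨N', rfl⟩ : ∃ N', N = N' + 1 := ⟨N - 1, by omega⟩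
    have := hMk N' le_rfl
    have hDs := DD_succ p N'
    simp only
    omega
  intro φ _ hq
  exact main_equiv hp hMk hF1 hF2 φ N le_rfl hq _ _ hOk

end Stmt0
end

section
/- Let A = (Q, {a}, δ, q0, F) be an alternating finite automaton over the singleton alphabet {a} with q0 ∉ F. Define A' = (Q ∪ {q0ⁿ, qfⁿ}, {a}, δ', q0ⁿ, {qfⁿ}), where q0ⁿ and qfⁿ are fresh states, δ'(q0ⁿ, a) = q0, δ'(qfⁿ, a) = ⊥, and for q ∈ Q: δ'(q, a) = q ∨ qfⁿ if δ(q, a) = ⊤, and otherwise δ'(q, a) is δ(q, a) with every occurrence of every q_f ∈ F simultaneously replaced by (q_f ∨ qfⁿ). Then L(A') = { a·w : w ∈ L(A) }; moreover the initial state q0ⁿ of A' is not accepting and the transition of its accepting state qfⁿ is ⊥. -/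
namespace Stmt10

open scoped Classical

/-- Positive Boolean formulas over `Q`. -/
inductive PosBool (Q : Type*) : Type _
  | tru : PosBool Q
  | fls : PosBool Q
  | var : Q → PosBool Q
  | and : PosBool Q → PosBool Q → PosBool Q
  | or : PosBool Q → PosBool Q → PosBool Q

/-- Evaluation of a positive Boolean formula under a valuation. -/
def PosBool.eval {Q : Type*} (v : Q → Prop) : PosBool Q → Prop
  | .tru => True
  | .fls => False
  | .var q => v q
  | .and x y => PosBool.eval v x ∧ PosBool.eval v y
  | .or x y => PosBool.eval v x ∨ PosBool.eval v y

/-- Simultaneous substitution of formulas for variables. -/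
def PosBool.subst {Q Q' : Type*} (g : Q → PosBool Q') : PosBool Q → PosBool Q'
  | .tru => .tru
  | .fls => .fls
  | .var q => g q
  | .and x y => .and (PosBool.subst g x) (PosBool.subst g y)
  | .or x y => .or (PosBool.subst g x) (PosBool.subst g y)

/-- An alternating finite automaton over the alphabet `A`. -/
structure AFA (Q A : Type*) where
  init : Q
  delta : Q → A → PosBool Q
  acc : Set Q

/-- The acceptance predicate: `AccFrom M w q` iff `M` accepts the finite word
`w` starting from state `q`. -/
def AFA.AccFrom {Q A : Type*} (M : AFA Q A) : List A → Q → Prop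
  | [], q => q ∈ M.acc
  | a :: w, q => PosBool.eval (fun q' => AFA.AccFrom M w q') (M.delta q a)

/-- The language of an AFA. -/
def AFA.lang {Q A : Type*} (M : AFA Q A) : Set (List A) := {w | M.AccFrom w M.init}

/-- The modified automaton `A'` over the singleton alphabet: two fresh states
`q0ⁿ = Sum.inr true` (new initial state) and `qfⁿ = Sum.inr false` (sole
accepting state, with transition `⊥`); `δ'(q0ⁿ, a) = q0`; for `q ∈ Q`,
`δ'(q, a) = q ∨ qfⁿ` if `δ(q, a) = ⊤`, and otherwise `δ'(q, a)` is `δ(q, a)`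
with every occurrence of every `q_f ∈ F` replaced by `(q_f ∨ qfⁿ)`. -/
noncomputable def afaPrime {Q : Type*} (M : AFA Q Unit) : AFA (Q ⊕ Bool) Unit where
  init := Sum.inr true
  acc := {Sum.inr false}
  delta := fun q' _ =>
    match q' with
    | Sum.inr true => PosBool.var (Sum.inl M.init)
    | Sum.inr false => PosBool.fls
    | Sum.inl q =>
      if M.delta q () = PosBool.tru then
        PosBool.or (PosBool.var (Sum.inl q)) (PosBool.var (Sum.inr false))
      else
        PosBool.subst
          (fun qf =>
            if qf ∈ M.acc then
              PosBool.or (PosBool.var (Sum.inl qf)) (PosBool.var (Sum.inr false))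
            else PosBool.var (Sum.inl qf))
          (M.delta q ())

lemma eval_congr {Q : Type*} {v v' : Q → Prop} (h : ∀ q, v q ↔ v' q) :
    ∀ φ : PosBool Q, PosBool.eval v φ ↔ PosBool.eval v' φ := by
  intro φ
  induction φ <;> simp [PosBool.eval, h, *]

lemma eval_subst {Q Q' : Type*} (g : Q → PosBool Q') (v : Q' → Prop) (φ : PosBool Q) :
    PosBool.eval v (PosBool.subst g φ) ↔ PosBool.eval (fun q => PosBool.eval v (g q)) φ := by
  induction φ <;> simp [PosBool.subst, PosBool.eval, *]

lemma accFrom_inr_false {Q : Type*} (M : AFA Q Unit) (w : List Unit) :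
    (afaPrime M).AccFrom w (Sum.inr false) ↔ w = [] := by
  cases w with
  | nil => simp [AFA.AccFrom, afaPrime]
  | cons a w => simp [AFA.AccFrom, afaPrime, PosBool.eval]

lemma key {Q : Type*} (M : AFA Q Unit) (w : List Unit) (hw : w ≠ []) (q : Q) :
    (afaPrime M).AccFrom w (Sum.inl q) ↔ M.AccFrom w q := by
  induction w generalizing q with
  | nil => exact absurd rfl hw
  | cons a w ih =>
    cases a
    show PosBool.eval _ ((afaPrime M).delta (Sum.inl q) ()) ↔
      PosBool.eval _ (M.delta q ())
    have hδ' : (afaPrime M).delta (Sum.inl q) () =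
        if M.delta q () = PosBool.tru then
          PosBool.or (PosBool.var (Sum.inl q)) (PosBool.var (Sum.inr false))
        else
          PosBool.subst
            (fun qf =>
              if qf ∈ M.acc then
                PosBool.or (PosBool.var (Sum.inl qf)) (PosBool.var (Sum.inr false))
              else PosBool.var (Sum.inl qf))
            (M.delta q ()) := rfl
    by_cases hδ : M.delta q () = PosBool.tru
    · rw [hδ', if_pos hδ, hδ]
      cases w with
      | nil => simp [PosBool.eval, accFrom_inr_false]
      | cons b w' =>
        cases b
        have hM : M.AccFrom (() :: w') q := by
          show PosBool.eval _ (M.delta q ())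
          rw [hδ]; trivial
        simp only [PosBool.eval]
        constructor
        · intro _; trivial
        · intro _; left; exact (ih (by simp) q).mpr hM
    · rw [hδ', if_neg hδ, eval_subst]
      refine eval_congr (fun qf => ?_) (M.delta q ())
      by_cases hf : qf ∈ M.acc
      · rw [if_pos hf]
        simp only [PosBool.eval]
        cases w with
        | nil =>
          simp [AFA.AccFrom, afaPrime, hf]
        | cons b w' =>
          rw [ih (by simp) qf, accFrom_inr_false]
          simp
      · rw [if_neg hf]
        simp only [PosBool.eval]
        cases w with
        | nil => simp [AFA.AccFrom, afaPrime, hf]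
        | cons b w' => exact ih (by simp) qf

/-- If `q0 ∉ F` then `L(A') = { a·w : w ∈ L(A) }`; moreover the initial state
of `A'` is not accepting and the transition of its accepting state is `⊥`. -/
theorem afaPrime_lang {Q : Type*} [Fintype Q] (M : AFA Q Unit)
    (h0 : M.init ∉ M.acc) :
    (afaPrime M).lang = {w | ∃ w', w = () :: w' ∧ w' ∈ M.lang} ∧
      (afaPrime M).init ∉ (afaPrime M).acc ∧
      (afaPrime M).delta (Sum.inr false) () = PosBool.fls := by
  refine ⟨?_, by simp [afaPrime], rfl⟩
  ext w
  simp only [AFA.lang, Set.mem_setOf_eq]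
  cases w with
  | nil =>
    simp [AFA.AccFrom, afaPrime]
  | cons a w' =>
    cases a
    have : (afaPrime M).AccFrom (() :: w') (afaPrime M).init ↔
        (afaPrime M).AccFrom w' (Sum.inl M.init) := Iff.rfl
    rw [this]
    cases w' with
    | nil =>
      simp only [AFA.AccFrom, afaPrime]
      constructor
      · intro h; exact absurd h (by simp [h0])
      · rintro ⟨w'', hw, hm⟩
        simp only [List.cons.injEq] at hw
        rw [← hw.2] at hm
        exact absurd hm h0
    | cons b w'' =>
      rw [key M _ (by simp) M.init]
      constructor
      · intro h; exact ⟨b :: w'', rfl, h⟩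
      · rintro ⟨w3, hw, hm⟩
        simp only [List.cons.injEq] at hw
        rwa [hw.2]

end Stmt10
end
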